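/- arXiv:1101.4430 — 2 statements merged into one kernel-verified Lean document; each statement's English description precedes it below -/
import Mathlib

section
/- Progress for unannotated Tvec: if Γ ⊢ a : φ and dom(Γ) ∩ FV(a) = ∅, then either a is a value or there exists a' with a ⇝ a'. Values are defined by v ::= λx.a | 0 | (S v) | nil | (cons v v') | join. -/
set_option autoImplicit true

/-- Unannotated Tvec terms. -/
inductive Tm : Type
  | var (x : String)
  | app (a b : Tm)
  | lam (x : String) (a : Tm)
  | zero
  | succ (a : Tm)
  | rnat (a a' a'' : Tm)
  | nil
  | cons (a a' : Tm)
  | rvec (a a' a'' : Tm)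
  | join
  deriving DecidableEq

/-- Tvec types. -/
inductive Ty : Type
  | nat
  | vec (phi : Ty) (l : Tm)
  | pi (x : String) (phi' phi : Ty)
  | all (x : String) (phi' phi : Ty)
  | eq (a a' : Tm)
  deriving DecidableEq

/-- Substitution [b/x] on terms. -/
def subst (b : Tm) (x : String) : Tm → Tm
  | .var y => if y = x then b else .var y
  | .app t u => .app (subst b x t) (subst b x u)
  | .lam y t => if y = x then .lam y t else .lam y (subst b x t)
  | .zero => .zero
  | .succ t => .succ (subst b x t)
  | .rnat t u v => .rnat (subst b x t) (subst b x u) (subst b x v)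
  | .nil => .nil
  | .cons t u => .cons (subst b x t) (subst b x u)
  | .rvec t u v => .rvec (subst b x t) (subst b x u) (subst b x v)
  | .join => .join

/-- Substitution [b/x] on types. -/
def substTy (b : Tm) (x : String) : Ty → Ty
  | .nat => .nat
  | .vec phi l => .vec (substTy b x phi) (subst b x l)
  | .pi y phi' phi =>
      if y = x then .pi y (substTy b x phi') phi
      else .pi y (substTy b x phi') (substTy b x phi)
  | .all y phi' phi =>
      if y = x then .all y (substTy b x phi') phi
      else .all y (substTy b x phi') (substTy b x phi)
  | .eq a a' => .eq (subst b x a) (subst b x a')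

/-- Simultaneous substitution [b/y, c/x] on terms (y, x assumed distinct). -/
def subst2 (b : Tm) (y : String) (c : Tm) (x : String) : Tm → Tm
  | .var z => if z = y then b else if z = x then c else .var z
  | .app t u => .app (subst2 b y c x t) (subst2 b y c x u)
  | .lam z t =>
      if z = y then (if z = x then .lam z t else .lam z (subst c x t))
      else if z = x then .lam z (subst b y t)
      else .lam z (subst2 b y c x t)
  | .zero => .zero
  | .succ t => .succ (subst2 b y c x t)
  | .rnat t u v => .rnat (subst2 b y c x t) (subst2 b y c x u) (subst2 b y c x v)
  | .nil => .nil
  | .cons t u => .cons (subst2 b y c x t) (subst2 b y c x u)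
  | .rvec t u v => .rvec (subst2 b y c x t) (subst2 b y c x u) (subst2 b y c x v)
  | .join => .join

/-- Simultaneous substitution [b/y, c/x] on types. -/
def subst2Ty (b : Tm) (y : String) (c : Tm) (x : String) : Ty → Ty
  | .nat => .nat
  | .vec phi l => .vec (subst2Ty b y c x phi) (subst2 b y c x l)
  | .pi z phi' phi =>
      .pi z (subst2Ty b y c x phi')
        (if z = y then (if z = x then phi else substTy c x phi)
         else if z = x then substTy b y phi
         else subst2Ty b y c x phi)
  | .all z phi' phi =>
      .all z (subst2Ty b y c x phi')
        (if z = y then (if z = x then phi else substTy c x phi)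
         else if z = x then substTy b y phi
         else subst2Ty b y c x phi)
  | .eq a a' => .eq (subst2 b y c x a) (subst2 b y c x a')

/-- Free variables of a term. -/
def FV : Tm → Finset String
  | .var x => {x}
  | .app t u => FV t ∪ FV u
  | .lam y t => FV t \ {y}
  | .zero => ∅
  | .succ t => FV t
  | .rnat t u v => FV t ∪ FV u ∪ FV v
  | .nil => ∅
  | .cons t u => FV t ∪ FV u
  | .rvec t u v => FV t ∪ FV u ∪ FV v
  | .join => ∅

/-- Free variables of a type. -/
def FVTy : Ty → Finset String
  | .nat => ∅
  | .vec phi l => FVTy phi ∪ FV l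
  | .pi y phi' phi => FVTy phi' ∪ (FVTy phi \ {y})
  | .all y phi' phi => FVTy phi' ∪ (FVTy phi \ {y})
  | .eq a a' => FV a ∪ FV a'

/-- Full reduction: compatible closure of the reduction rules of Figure 1. -/
inductive Step : Tm → Tm → Prop
  | beta : Step (.app (.lam x a) b) (subst b x a)
  | rnatZero : Step (.rnat a a' .zero) a
  | rnatSucc : Step (.rnat a a' (.succ b)) (.app (.app a' b) (.rnat a a' b))
  | rvecNil : Step (.rvec a a' .nil) a
  | rvecCons : Step (.rvec a a' (.cons b c)) (.app (.app (.app a' b) c) (.rvec a a' c))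
  | appLeft : Step a a' → Step (.app a b) (.app a' b)
  | appRight : Step b b' → Step (.app a b) (.app a b')
  | lamBody : Step a a' → Step (.lam x a) (.lam x a')
  | succArg : Step a a' → Step (.succ a) (.succ a')
  | consLeft : Step a a' → Step (.cons a b) (.cons a' b)
  | consRight : Step b b' → Step (.cons a b) (.cons a b')
  | rnat1 : Step a a₂ → Step (.rnat a b c) (.rnat a₂ b c)
  | rnat2 : Step b b₂ → Step (.rnat a b c) (.rnat a b₂ c)
  | rnat3 : Step c c₂ → Step (.rnat a b c) (.rnat a b c₂)
  | rvec1 : Step a a₂ → Step (.rvec a b c) (.rvec a₂ b c)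
  | rvec2 : Step b b₂ → Step (.rvec a b c) (.rvec a b₂ c)
  | rvec3 : Step c c₂ → Step (.rvec a b c) (.rvec a b c₂)

def Steps : Tm → Tm → Prop := Relation.ReflTransGen Step

/-- Joinability a ↓ a'. -/
def Joinable (a a' : Tm) : Prop := ∃ c, Steps a c ∧ Steps a' c

/-- Typing contexts (most recent binding first). -/
abbrev Ctx := List (String × Ty)

def dom (Γ : Ctx) : Finset String := (Γ.map Prod.fst).toFinset

def lookupC (Γ : Ctx) (x : String) : Option Ty :=
  (Γ.find? (fun p => p.1 == x)).map Prod.snd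

/-- Γ Ok: each declared type mentions only previously declared variables. -/
def Ok : Ctx → Prop
  | [] => True
  | (x, phi) :: Γ => x ∉ dom Γ ∧ FVTy phi ⊆ dom Γ ∧ Ok Γ

/-- Type assignment for unannotated Tvec (Figure 2). -/
inductive Typing : Ctx → Tm → Ty → Prop
  | var : lookupC Γ x = some phi → Ok Γ → Typing Γ (.var x) phi
  | join : Joinable a a' → Ok Γ → Typing Γ .join (.eq a a')
  | conv : Typing Γ p (.eq a' a'') → Typing Γ a (substTy a' x phi) → x ∉ dom Γ →
      Typing Γ a (substTy a'' x phi)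
  | specAbs : Typing ((x, phi') :: Γ) a phi → x ∉ FV a → Typing Γ a (.all x phi' phi)
  | specApp : Typing Γ a (.all x phi' phi) → Typing Γ a' phi' → Typing Γ a (substTy a' x phi)
  | abs : Typing ((x, phi') :: Γ) a phi → Typing Γ (.lam x a) (.pi x phi' phi)
  | app : Typing Γ a (.pi x phi' phi) → Typing Γ b phi' → Typing Γ (.app a b) (substTy b x phi)
  | zero : Ok Γ → Typing Γ .zero .nat
  | succ : Typing Γ a .nat → Typing Γ (.succ a) .nat
  | nil : Ok Γ → Typing Γ .nil (.vec phi .zero)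
  | cons : Typing Γ a phi → Typing Γ a' (.vec phi l) →
      Typing Γ (.cons a a') (.vec phi (.succ l))
  | rnat : x ∉ dom Γ → Typing Γ a'' .nat → Typing Γ a (substTy .zero x phi) →
      Typing Γ a' (.pi y .nat (.pi u (substTy (.var y) x phi)
        (substTy (.succ (.var y)) x phi))) →
      Typing Γ (.rnat a a' a'') (substTy a'' x phi)
  | rvec : x ∉ dom Γ → Typing Γ a'' (.vec phi' l) →
      Typing Γ a (subst2Ty .zero y .nil x phi) →
      Typing Γ a' (.pi z phi' (.all lv .nat (.pi v (.vec phi' (.var lv)) (.pi u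
        (subst2Ty (.var lv) y (.var v) x phi)
        (subst2Ty (.succ (.var lv)) y (.cons (.var z) (.var v)) x phi))))) →
      Typing Γ (.rvec a a' a'') (subst2Ty l y a'' x phi)

/-- Values. -/
inductive IsValue : Tm → Prop
  | lam : IsValue (.lam x a)
  | zero : IsValue .zero
  | succ : IsValue v → IsValue (.succ v)
  | nil : IsValue .nil
  | cons : IsValue v → IsValue v' → IsValue (.cons v v')
  | join : IsValue .join

/-- Head kinds of types (skipping leading ∀'s). -/
inductive HK : Type
  | nat | vec | pi | eq
  deriving DecidableEq

def tyHead : Ty → HK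
  | .nat => .nat
  | .vec _ _ => .vec
  | .pi _ _ _ => .pi
  | .all _ _ phi => tyHead phi
  | .eq _ _ => .eq

def tmHead : Tm → Option HK
  | .lam _ _ => some .pi
  | .zero => some .nat
  | .succ _ => some .nat
  | .nil => some .vec
  | .cons _ _ => some .vec
  | .join => some .eq
  | _ => none

lemma tyHead_substTy (b : Tm) (x : String) : ∀ phi, tyHead (substTy b x phi) = tyHead phi := by
  intro phi
  induction phi with
  | nat => rfl
  | vec _ _ _ => rfl
  | pi y p q ih1 ih2 => simp only [substTy]; split <;> rfl
  | all y p q ih1 ih2 =>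
      simp only [substTy]; split
      · rfl
      · simpa [tyHead] using ih2
  | eq _ _ => rfl

lemma headLemma {Γ : Ctx} {a : Tm} {phi : Ty} (h : Typing Γ a phi) :
    ∀ k, tmHead a = some k → tyHead phi = k := by
  induction h with
  | var _ _ => intro k hk; simp [tmHead] at hk
  | join _ _ => intro k hk; simp [tmHead] at hk; simp [tyHead, ← hk]
  | conv _ _ _ _ ih2 => intro k hk; rw [tyHead_substTy]; rw [tyHead_substTy] at ih2; exact ih2 k hk
  | specAbs _ _ ih => intro k hk; simpa [tyHead] using ih k hk
  | specApp _ _ ih1 _ => intro k hk; rw [tyHead_substTy]; simpa [tyHead] using ih1 k hk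
  | abs _ _ => intro k hk; simp [tmHead] at hk; simp [tyHead, ← hk]
  | app _ _ _ _ => intro k hk; simp [tmHead] at hk
  | zero _ => intro k hk; simp [tmHead] at hk; simp [tyHead, ← hk]
  | succ _ _ => intro k hk; simp [tmHead] at hk; simp [tyHead, ← hk]
  | nil _ => intro k hk; simp [tmHead] at hk; simp [tyHead, ← hk]
  | cons _ _ _ _ => intro k hk; simp [tmHead] at hk; simp [tyHead, ← hk]
  | rnat _ _ _ _ _ _ _ => intro k hk; simp [tmHead] at hk
  | rvec _ _ _ _ _ _ _ => intro k hk; simp [tmHead] at hk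

lemma lookup_mem_dom {Γ : Ctx} {x : String} {phi : Ty} (h : lookupC Γ x = some phi) :
    x ∈ dom Γ := by
  unfold lookupC at h
  rcases Option.map_eq_some_iff.1 h with ⟨p, hp, _⟩
  have hmem := List.mem_of_find?_eq_some hp
  have hx : p.1 = x := by
    have := List.find?_some hp
    simpa using this
  simp only [dom, List.mem_toFinset, List.mem_map]
  exact ⟨p, hmem, hx⟩

lemma progress_aux {Γ : Ctx} {a : Tm} {phi : Ty} (h : Typing Γ a phi) :
    Disjoint (dom Γ) (FV a) → IsValue a ∨ ∃ a', Step a a' := by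
  induction h with
  | @var Γ x phi hl hok =>
      intro hfv
      exact absurd (by simp [FV] : x ∈ FV (Tm.var x))
        (Finset.disjoint_left.1 hfv (lookup_mem_dom hl))
  | join _ _ => exact fun _ => Or.inl IsValue.join
  | conv _ _ _ _ ih2 => exact ih2
  | @specAbs x phi' Γ a phi ht hx ih =>
      intro hfv
      apply ih
      simp only [dom, List.map_cons, List.toFinset_cons, Finset.disjoint_insert_left] at *
      exact ⟨hx, hfv⟩
  | specApp _ _ ih1 _ => exact ih1
  | abs _ _ => exact fun _ => Or.inl IsValue.lam
  | @app Γ a x phi' phi b ha hb iha ihb =>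
      intro hfv
      have hfva : Disjoint (dom Γ) (FV a) := by
        simp only [FV, Finset.disjoint_union_right] at hfv; exact hfv.1
      rcases iha hfva with hv | ⟨a', hs⟩
      · cases hv with
        | lam => exact Or.inr ⟨_, Step.beta⟩
        | zero => have := headLemma ha HK.nat rfl; simp [tyHead] at this
        | succ _ => have := headLemma ha HK.nat rfl; simp [tyHead] at this
        | nil => have := headLemma ha HK.vec rfl; simp [tyHead] at this
        | cons _ _ => have := headLemma ha HK.vec rfl; simp [tyHead] at this
        | join => have := headLemma ha HK.eq rfl; simp [tyHead] at this
      · exact Or.inr ⟨_, Step.appLeft hs⟩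
  | zero _ => exact fun _ => Or.inl IsValue.zero
  | succ _ ih =>
      intro hfv
      rcases ih (by simpa [FV] using hfv) with hv | ⟨a', hs⟩
      · exact Or.inl (IsValue.succ hv)
      · exact Or.inr ⟨_, Step.succArg hs⟩
  | nil _ => exact fun _ => Or.inl IsValue.nil
  | cons _ _ ih1 ih2 =>
      intro hfv
      simp only [FV, Finset.disjoint_union_right] at hfv
      rcases ih1 hfv.1 with hv1 | ⟨a', hs⟩
      · rcases ih2 hfv.2 with hv2 | ⟨a', hs⟩
        · exact Or.inl (IsValue.cons hv1 hv2)
        · exact Or.inr ⟨_, Step.consRight hs⟩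
      · exact Or.inr ⟨_, Step.consLeft hs⟩
  | @rnat Γ x a'' a phi a' y u hx ha'' ha ha' ih'' iha iha' =>
      intro hfv
      have hfv3 : Disjoint (dom Γ) (FV a'') := by
        simp only [FV, Finset.disjoint_union_right] at hfv; exact hfv.2
      rcases ih'' hfv3 with hv | ⟨c, hs⟩
      · cases hv with
        | zero => exact Or.inr ⟨_, Step.rnatZero⟩
        | succ _ => exact Or.inr ⟨_, Step.rnatSucc⟩
        | lam => have := headLemma ha'' HK.pi rfl; simp [tyHead] at this
        | nil => have := headLemma ha'' HK.vec rfl; simp [tyHead] at this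
        | cons _ _ => have := headLemma ha'' HK.vec rfl; simp [tyHead] at this
        | join => have := headLemma ha'' HK.eq rfl; simp [tyHead] at this
      · exact Or.inr ⟨_, Step.rnat3 hs⟩
  | @rvec Γ x a'' phi' l a y phi a' z lv v u hx ha'' ha ha' ih'' iha iha' =>
      intro hfv
      have hfv3 : Disjoint (dom Γ) (FV a'') := by
        simp only [FV, Finset.disjoint_union_right] at hfv; exact hfv.2
      rcases ih'' hfv3 with hv | ⟨c, hs⟩
      · cases hv with
        | nil => exact Or.inr ⟨_, Step.rvecNil⟩
        | cons _ _ => exact Or.inr ⟨_, Step.rvecCons⟩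
        | lam => have := headLemma ha'' HK.pi rfl; simp [tyHead] at this
        | zero => have := headLemma ha'' HK.nat rfl; simp [tyHead] at this
        | succ _ => have := headLemma ha'' HK.nat rfl; simp [tyHead] at this
        | join => have := headLemma ha'' HK.eq rfl; simp [tyHead] at this
      · exact Or.inr ⟨_, Step.rvec3 hs⟩

/-- Progress for unannotated Tvec. -/
theorem progress (Γ : Ctx) (a : Tm) (phi : Ty)
    (h : Typing Γ a phi) (hfv : dom Γ ∩ FV a = ∅) :
    IsValue a ∨ ∃ a', Step a a' :=
  progress_aux h (Finset.disjoint_iff_inter_eq_empty.2 hfv)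
end

section
/- Canonical Forms for unannotated Tvec: suppose dom(Γ) ∩ FV(v) = ∅ where v is a value. Then: (1) if Γ ⊢ v : ∀x⃗.nat then v = 0 or v = S v'; (2) if Γ ⊢ v : ∀x⃗.⟨vec φ l⟩ then v = nil or v = cons v' v''; (3) if Γ ⊢ v : ∀x⃗.Πx:φ'.φ then v = λx.a; (4) if Γ ⊢ v : ∀x⃗.(a₁ = a₂) then v = join. Here ∀x⃗.φ denotes a (possibly empty) prefix of ∀-quantifiers. -/
set_option autoImplicit true

/-- ∀x⃗.φ : a (possibly empty) prefix of ∀-quantifiers in front of φ. -/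
def mkAll : List (String × Ty) → Ty → Ty
  | [], phi => phi
  | (x, psi) :: xs, phi => .all x psi (mkAll xs phi)


/-- Head kind of a type after stripping leading (and nested) ∀-quantifiers. -/
def hk : Ty → Nat
  | .nat => 0
  | .vec _ _ => 1
  | .pi _ _ _ => 2
  | .eq _ _ => 3
  | .all _ _ phi => hk phi

lemma hk_substTy (b : Tm) (x : String) : ∀ phi, hk (substTy b x phi) = hk phi := by
  intro phi
  induction phi with
  | nat => simp [substTy, hk]
  | vec _ _ _ => simp [substTy, hk]
  | pi y p q ih1 ih2 => unfold substTy; split <;> simp [hk]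
  | all y p q ih1 ih2 => unfold substTy; split <;> simp [hk, ih2]
  | eq _ _ => simp [substTy, hk]

lemma hk_mkAll : ∀ xs phi, hk (mkAll xs phi) = hk phi
  | [], _ => rfl
  | (x, psi) :: xs, phi => by simp [mkAll, hk, hk_mkAll xs phi]

lemma key {Γ : Ctx} {v : Tm} {phi : Ty} (h : Typing Γ v phi) (hv : IsValue v) :
    (hk phi = 0 → v = .zero ∨ ∃ v', v = .succ v') ∧
    (hk phi = 1 → v = .nil ∨ ∃ v' v'', v = .cons v' v'') ∧
    (hk phi = 2 → ∃ y a, v = .lam y a) ∧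
    (hk phi = 3 → v = .join) := by
  induction h with
  | var _ _ => cases hv
  | join _ _ =>
      refine ⟨?_, ?_, ?_, ?_⟩ <;> intro hh <;> simp [hk] at hh ⊢
  | conv _ _ _ ih1 ih2 =>
      have := ih2 hv
      simpa [hk_substTy] using this
  | specAbs _ _ ih =>
      simpa [hk] using ih hv
  | specApp _ _ ih1 ih2 =>
      have := ih1 hv
      simp [hk] at this
      simpa [hk_substTy] using this
  | abs _ _ =>
      refine ⟨?_, ?_, ?_, ?_⟩ <;> intro hh <;> simp [hk] at hh ⊢
  | app _ _ _ _ => cases hv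
  | zero _ =>
      refine ⟨?_, ?_, ?_, ?_⟩ <;> intro hh <;> simp [hk] at hh ⊢
  | succ _ _ =>
      refine ⟨?_, ?_, ?_, ?_⟩ <;> intro hh <;> simp [hk] at hh ⊢
  | nil _ =>
      refine ⟨?_, ?_, ?_, ?_⟩ <;> intro hh <;> simp [hk] at hh ⊢
  | cons _ _ _ _ =>
      refine ⟨?_, ?_, ?_, ?_⟩ <;> intro hh <;> simp [hk] at hh ⊢
  | rnat _ _ _ _ _ _ _ => cases hv
  | rvec _ _ _ _ _ _ _ => cases hv

/-- Canonical Forms for unannotated Tvec. -/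
theorem canonical_forms (Γ : Ctx) (v : Tm)
    (hv : IsValue v) (hdisj : dom Γ ∩ FV v = ∅) :
    (∀ xs, Typing Γ v (mkAll xs .nat) → v = .zero ∨ ∃ v', v = .succ v') ∧
    (∀ xs phi l, Typing Γ v (mkAll xs (.vec phi l)) →
        v = .nil ∨ ∃ v' v'', v = .cons v' v'') ∧
    (∀ xs x phi' phi, Typing Γ v (mkAll xs (.pi x phi' phi)) → ∃ y a, v = .lam y a) ∧
    (∀ xs a₁ a₂, Typing Γ v (mkAll xs (.eq a₁ a₂)) → v = .join) := by
  refine ⟨?_, ?_, ?_, ?_⟩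
  · intro xs h
    exact (key h hv).1 (by simp [hk_mkAll, hk])
  · intro xs phi l h
    exact (key h hv).2.1 (by simp [hk_mkAll, hk])
  · intro xs x phi' phi h
    exact (key h hv).2.2.1 (by simp [hk_mkAll, hk])
  · intro xs a1 a2 h
    exact (key h hv).2.2.2 (by simp [hk_mkAll, hk])
end
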